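/- arXiv:1908.08473 — 4 statements merged into one kernel-verified Lean document; each statement's English description precedes it below -/
import Mathlib

section
/- Let f : (0,∞) → ℝ be a differentiable function and let ε = +1 or ε = −1. Define K(r) := cos f(r), V(r) := ε·sin f(r)/r, U(r) := ε·(r f'(r) − sin f(r))/r. Then for every r > 0 the three equations K'(r) + r V(r)(V(r)+U(r)) = 0, −K'(r) + (K(r)² − 1)/r − r V(r) U(r) = 0, and r V'(r) − U(r) − (K(r) − 1)(V(r) + U(r)) = 0 all hold. -/
/-- For `K := cos ∘ f`, `V := ε sin f / r`, `U := ε (r f' - sin f)/r`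
with `ε = ±1`, the three spherically symmetric zero-curvature equations hold. -/
theorem stmt0 (f : ℝ → ℝ) (hf : ∀ r > 0, DifferentiableAt ℝ f r)
    (ε : ℝ) (hε : ε = 1 ∨ ε = -1)
    (K V U : ℝ → ℝ)
    (hK : ∀ r > 0, K r = Real.cos (f r))
    (hV : ∀ r > 0, V r = ε * Real.sin (f r) / r)
    (hU : ∀ r > 0, U r = ε * (r * deriv f r - Real.sin (f r)) / r) :
    ∀ r > 0,
      deriv K r + r * V r * (V r + U r) = 0 ∧
      -deriv K r + (K r ^ 2 - 1) / r - r * V r * U r = 0 ∧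
      r * deriv V r - U r - (K r - 1) * (V r + U r) = 0 := by
  intro r hr
  have hr0 : r ≠ 0 := ne_of_gt hr
  have hfd := (hf r hr).hasDerivAt
  have hKev : K =ᶠ[nhds r] fun x => Real.cos (f x) := by
    filter_upwards [eventually_gt_nhds hr] with x hx using hK x hx
  have hVev : V =ᶠ[nhds r] fun x => ε * Real.sin (f x) / x := by
    filter_upwards [eventually_gt_nhds hr] with x hx using hV x hx
  have hKd : HasDerivAt (fun x => Real.cos (f x)) (-Real.sin (f r) * deriv f r) r :=
    (Real.hasDerivAt_cos (f r)).comp r hfd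
  have hsd : HasDerivAt (fun x => ε * Real.sin (f x)) (ε * (Real.cos (f r) * deriv f r)) r :=
    ((Real.hasDerivAt_sin (f r)).comp r hfd).const_mul ε
  have hVd : HasDerivAt (fun x => ε * Real.sin (f x) / x)
      ((ε * (Real.cos (f r) * deriv f r) * r - ε * Real.sin (f r) * 1) / r ^ 2) r :=
    hsd.div (hasDerivAt_id r) hr0
  have hK' : deriv K r = -Real.sin (f r) * deriv f r := by
    rw [hKev.deriv_eq, hKd.deriv]
  have hV' : deriv V r = (ε * (Real.cos (f r) * deriv f r) * r - ε * Real.sin (f r) * 1) / r ^ 2 := by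
    rw [hVev.deriv_eq, hVd.deriv]
  have hε2 : ε * ε = 1 := by rcases hε with h | h <;> rw [h] <;> norm_num
  have hpyth : Real.sin (f r) ^ 2 + Real.cos (f r) ^ 2 = 1 := Real.sin_sq_add_cos_sq (f r)
  rw [hK r hr, hV r hr, hU r hr, hK', hV']
  rcases hε with h | h <;> subst h <;>
    refine ⟨?_, ?_, ?_⟩ <;> field_simp <;> nlinarith [hpyth]
end

section
/- Let K, V, U : (0,∞) → ℝ be differentiable functions satisfying, for all r > 0, the three equations K' + r V(V+U) = 0, −K' + (K² − 1)/r − r V U = 0, and r V' − U − (K − 1)(V + U) = 0. Then there exists a differentiable function f : (0,∞) → ℝ such that for all r > 0: K(r) = cos f(r), V(r) = sin f(r)/r, and U(r) = (r f'(r) − sin f(r))/r. -/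
open Real intervalIntegral MeasureTheory

/-- Any differentiable solution `K, V, U` of the spherically symmetric
zero-curvature equations has the form `K = cos f`, `V = sin f / r`,
`U = (r f' - sin f)/r` for some differentiable function `f`. -/
theorem stmt1 (K V U : ℝ → ℝ)
    (hK : ∀ r > 0, DifferentiableAt ℝ K r)
    (hV : ∀ r > 0, DifferentiableAt ℝ V r)
    (hU : ∀ r > 0, DifferentiableAt ℝ U r)
    (h1 : ∀ r > 0, deriv K r + r * V r * (V r + U r) = 0)
    (h2 : ∀ r > 0, -deriv K r + (K r ^ 2 - 1) / r - r * V r * U r = 0)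
    (h3 : ∀ r > 0, r * deriv V r - U r - (K r - 1) * (V r + U r) = 0) :
    ∃ f : ℝ → ℝ, (∀ r > 0, DifferentiableAt ℝ f r) ∧
      ∀ r > 0, K r = Real.cos (f r) ∧ V r = Real.sin (f r) / r ∧
        U r = (r * deriv f r - Real.sin (f r)) / r := by
  -- the angular speed
  set b : ℝ → ℝ := fun r => if 0 < r then U r + V r else 0 with hbdef
  have hbcont : ∀ r > 0, ContinuousAt b r := by
    intro r hr
    have heq : b =ᶠ[nhds r] fun s => U s + V s := by
      filter_upwards [Ioi_mem_nhds hr] with s hs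
      simp [hbdef, Set.mem_Ioi.mp hs]
    exact ContinuousAt.congr (((hU r hr).continuousAt).add ((hV r hr).continuousAt)) heq.symm
  have hbcontOn : ContinuousOn b (Set.Ioi 0) :=
    continuousOn_of_forall_continuousAt fun x hx => hbcont x hx
  have hbint : ∀ r > 0, IntervalIntegrable b MeasureTheory.volume 1 r := by
    intro r hr
    apply ContinuousOn.intervalIntegrable
    apply hbcontOn.mono
    intro x hx
    simp only [Set.mem_uIcc] at hx
    rcases hx with ⟨h,_⟩|⟨h,_⟩ <;> simp only [Set.mem_Ioi] <;> linarith
  -- initial angle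
  have hone : (1:ℝ) > 0 := one_pos
  have hcirc1 : K 1 ^ 2 + V 1 ^ 2 = 1 := by
    have e1 := h1 1 hone
    have e2 := h2 1 hone
    nlinarith [e1, e2]
  set z : ℂ := ⟨K 1, V 1⟩ with hz
  have hzabs : ‖z‖ = 1 := by
    simp [Complex.norm_def, Complex.normSq, hz, Complex.normSq_mk]
    nlinarith [hcirc1]
  have hzne : z ≠ 0 := by
    intro h; rw [h] at hzabs; simp at hzabs
  set θ : ℝ := Complex.arg z with hθ
  have hcosθ : Real.cos θ = K 1 := by
    rw [hθ, Complex.cos_arg hzne, hzabs]; simp [hz]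
  have hsinθ : Real.sin θ = V 1 := by
    rw [hθ, Complex.sin_arg, hzabs]; simp [hz]
  -- the angle function
  set f : ℝ → ℝ := fun r => θ + ∫ t in (1:ℝ)..r, b t with hf
  have hfderiv : ∀ r > 0, HasDerivAt f (U r + V r) r := by
    intro r hr
    have h := intervalIntegral.integral_hasDerivAt_right (hbint r hr)
      (ContinuousOn.stronglyMeasurableAtFilter isOpen_Ioi hbcontOn r hr) (hbcont r hr)
    have : b r = U r + V r := by simp [hbdef, hr]
    rw [this] at h
    exact (h.const_add θ)
  have hfdiff : ∀ r > 0, DifferentiableAt ℝ f r := fun r hr => (hfderiv r hr).differentiableAt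
  have hf1 : f 1 = θ := by simp [hf]
  -- the discrepancy function
  set D : ℝ → ℝ := fun r => (K r - Real.cos (f r))^2 + (r * V r - Real.sin (f r))^2 with hD
  have hDderiv : ∀ r > 0, HasDerivAt D 0 r := by
    intro r hr
    have hKr := (hK r hr).hasDerivAt
    have hVr := (hV r hr).hasDerivAt
    have hfr := hfderiv r hr
    have hcos : HasDerivAt (fun s => Real.cos (f s)) (-Real.sin (f r) * (U r + V r)) r :=
      (Real.hasDerivAt_cos (f r)).comp r hfr
    have hsin : HasDerivAt (fun s => Real.sin (f s)) (Real.cos (f r) * (U r + V r)) r :=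
      (Real.hasDerivAt_sin (f r)).comp r hfr
    have hrV : HasDerivAt (fun s => s * V s) (1 * V r + r * deriv V r) r :=
      (hasDerivAt_id r).mul hVr
    have hsq1 : HasDerivAt (fun s => (K s - Real.cos (f s))^2)
        (2 * (K r - Real.cos (f r)) * (deriv K r - (-Real.sin (f r) * (U r + V r)))) r := by
      have := ((hKr.sub hcos).pow 2)
      convert this using 1
      · rfl
      · rfl
      · rfl
      simp only [Pi.sub_apply]
      ring
    have hsq2 : HasDerivAt (fun s => (s * V s - Real.sin (f s))^2)
        (2 * (r * V r - Real.sin (f r)) * ((1 * V r + r * deriv V r) - Real.cos (f r) * (U r + V r))) r := by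
      have := ((hrV.sub hsin).pow 2)
      convert this using 1
      · rfl
      · rfl
      · rfl
      simp only [Pi.sub_apply]
      ring
    have h := hsq1.add hsq2
    have e1 := h1 r hr
    have e3 := h3 r hr
    convert h using 1
    · rfl
    · rfl
    · rfl
    linear_combination (-2*(K r - Real.cos (f r))) * e1 + (-2*(r*V r - Real.sin (f r))) * e3
  -- D is constant on Ioi 0, equal to D 1 = 0
  have hD1 : D 1 = 0 := by
    simp [hD, hf1, hcosθ, hsinθ]
  have hDconst : ∀ r > 0, D r = 0 := by
    intro r hr
    have hconv : Convex ℝ (Set.Ioi (0:ℝ)) := convex_Ioi 0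
    have hdiffOn : DifferentiableOn ℝ D (Set.Ioi 0) := fun x hx =>
      ((hDderiv x hx).differentiableAt).differentiableWithinAt
    have hfd : ∀ x ∈ Set.Ioi (0:ℝ), fderivWithin ℝ D (Set.Ioi 0) x = 0 := by
      intro x hx
      rw [fderivWithin_of_isOpen isOpen_Ioi hx]
      have := (hDderiv x hx).hasFDerivAt.fderiv
      rw [this]
      ext
      simp
    have := hconv.is_const_of_fderivWithin_eq_zero hdiffOn hfd hr (Set.mem_Ioi.mpr hone)
    rw [this, hD1]
  refine ⟨f, hfdiff, fun r hr => ?_⟩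
  have hDr := hDconst r hr
  have hsq : (K r - Real.cos (f r))^2 + (r * V r - Real.sin (f r))^2 = 0 := hDr
  have hK' : K r = Real.cos (f r) := by nlinarith [sq_nonneg (K r - Real.cos (f r)), sq_nonneg (r * V r - Real.sin (f r))]
  have hV' : r * V r = Real.sin (f r) := by nlinarith [sq_nonneg (K r - Real.cos (f r)), sq_nonneg (r * V r - Real.sin (f r))]
  have hrne : r ≠ 0 := ne_of_gt hr
  have hdf : deriv f r = U r + V r := (hfderiv r hr).deriv
  refine ⟨hK', by field_simp [← hV']; linarith, ?_⟩
  rw [hdf, ← hV']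
  field_simp
  ring
end

section
/- Let W, V, U : (0,∞) → ℝ be differentiable functions and define A : ℝ³∖{0} → ℝ³⊗ℝ³ by A_μ{}^i(x) = ε_μ{}^{ij} (x_j/r) W(r) + δ_μ^i V(r) + (x_μ x^i/r²) U(r), where r = |x|. Then the curvature F_{μν}{}^i := ∂_μ A_ν{}^i − ∂_ν A_μ{}^i + Σ_{j,k} A_μ{}^j A_ν{}^k ε_{jki} satisfies, for all x ≠ 0: F_{μν}{}^i = ε_{μν}{}^i [W' + W/r + V(V+U)] + (ε_{μν}{}^j x_j x^i/r³)(W − rW' + rW² − rVU) + ((x_μ δ_ν^i − x_ν δ_μ^i)/r²)[rV' − U − rW(V+U)]. -/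
/-- The totally antisymmetric Levi-Civita symbol on three indices, `eps 0 1 2 = 1`. -/
noncomputable def eps (i j k : Fin 3) : ℝ :=
  ((j : ℝ) - (i : ℝ)) * ((k : ℝ) - (i : ℝ)) * ((k : ℝ) - (j : ℝ)) / 2

/-- The radius `r = |x|` of a point `x ∈ ℝ³`. -/
noncomputable def rad (x : Fin 3 → ℝ) : ℝ := Real.sqrt (∑ i, x i ^ 2)

/-- The partial derivative `∂_μ g` at `x`. -/
noncomputable def pd (g : (Fin 3 → ℝ) → ℝ) (μ : Fin 3) (x : Fin 3 → ℝ) : ℝ :=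
  fderiv ℝ g x (Pi.single μ 1)

lemma sum_sq_pos {x : Fin 3 → ℝ} (hx : x ≠ 0) : 0 < ∑ i, x i ^ 2 := by
  rcases Function.ne_iff.1 hx with ⟨i, hi⟩
  exact Finset.sum_pos' (fun j _ => sq_nonneg _) ⟨i, Finset.mem_univ i, pow_two_pos_of_ne_zero hi⟩

lemma rad_pos {x : Fin 3 → ℝ} (hx : x ≠ 0) : 0 < rad x := Real.sqrt_pos.2 (sum_sq_pos hx)

lemma rad_sq (x : Fin 3 → ℝ) : rad x ^ 2 = ∑ i, x i ^ 2 :=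
  Real.sq_sqrt (Finset.sum_nonneg fun i _ => sq_nonneg _)

noncomputable def radD (x : Fin 3 → ℝ) : (Fin 3 → ℝ) →L[ℝ] ℝ :=
  (rad x)⁻¹ • (∑ j, x j • (ContinuousLinearMap.proj j : (Fin 3 → ℝ) →L[ℝ] ℝ))

lemma radD_apply (x : Fin 3 → ℝ) (μ : Fin 3) : radD x (Pi.single μ 1) = x μ / rad x := by
  simp [radD, ContinuousLinearMap.sum_apply, Pi.single_apply, div_eq_inv_mul]

lemma hasFDerivAt_rad {x : Fin 3 → ℝ} (hx : x ≠ 0) : HasFDerivAt rad (radD x) x := by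
  have hq : HasFDerivAt (fun y : Fin 3 → ℝ => ∑ i, y i ^ 2)
      (∑ j, (2 * x j) • (ContinuousLinearMap.proj j : (Fin 3 → ℝ) →L[ℝ] ℝ)) x := by
    apply HasFDerivAt.fun_sum
    intro j _
    have h := (ContinuousLinearMap.proj (R := ℝ) (φ := fun _ : Fin 3 => ℝ) j).hasFDerivAt (x := x)
    simpa [sq, two_mul, add_smul] using h.fun_mul h
  have hs : HasDerivAt Real.sqrt (1 / (2 * Real.sqrt (∑ i, x i ^ 2))) (∑ i, x i ^ 2) :=
    Real.hasDerivAt_sqrt (ne_of_gt (sum_sq_pos hx))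
  have h2 := hs.comp_hasFDerivAt x hq
  have : (1 / (2 * Real.sqrt (∑ i, x i ^ 2))) • (∑ j, (2 * x j) • (ContinuousLinearMap.proj j : (Fin 3 → ℝ) →L[ℝ] ℝ)) = radD x := by
    rw [radD, Finset.smul_sum, Finset.smul_sum]
    apply Finset.sum_congr rfl
    intro j _
    rw [smul_smul, smul_smul]
    congr 1
    have h0 : Real.sqrt (∑ i, x i ^ 2) ≠ 0 := ne_of_gt (rad_pos hx)
    rw [rad]
    field_simp
  rw [← this]
  exact h2

lemma hasFDerivAt_radial {x : Fin 3 → ℝ} (hx : x ≠ 0) {g : ℝ → ℝ}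
    (hg : DifferentiableAt ℝ g (rad x)) :
    HasFDerivAt (fun y => g (rad y)) (deriv g (rad x) • radD x) x :=
  (hg.hasDerivAt).comp_hasFDerivAt x (hasFDerivAt_rad hx)

lemma diff_radial {x : Fin 3 → ℝ} (hx : x ≠ 0) {g : ℝ → ℝ}
    (hg : DifferentiableAt ℝ g (rad x)) :
    DifferentiableAt ℝ (fun y => g (rad y)) x :=
  (hasFDerivAt_radial hx hg).differentiableAt

lemma pd_radial {x : Fin 3 → ℝ} (hx : x ≠ 0) {g : ℝ → ℝ}
    (hg : DifferentiableAt ℝ g (rad x)) (μ : Fin 3) :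
    pd (fun y => g (rad y)) μ x = deriv g (rad x) * (x μ / rad x) := by
  rw [pd, (hasFDerivAt_radial hx hg).fderiv]
  simp [radD_apply]

lemma diff_coord (x : Fin 3 → ℝ) (j : Fin 3) : DifferentiableAt ℝ (fun y : Fin 3 → ℝ => y j) x :=
  (ContinuousLinearMap.proj (R := ℝ) (φ := fun _ : Fin 3 => ℝ) j).differentiableAt

lemma pd_coord (x : Fin 3 → ℝ) (j μ : Fin 3) :
    pd (fun y : Fin 3 → ℝ => y j) μ x = if j = μ then 1 else 0 := by
  have h : fderiv ℝ (fun y : Fin 3 → ℝ => y j) x = ContinuousLinearMap.proj j :=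
    ((ContinuousLinearMap.proj (R := ℝ) (φ := fun _ : Fin 3 => ℝ) j).hasFDerivAt (x := x)).fderiv
  rw [pd, h]
  simp [Pi.single_apply]

lemma pd_add {f g : (Fin 3 → ℝ) → ℝ} {x : Fin 3 → ℝ} (hf : DifferentiableAt ℝ f x)
    (hg : DifferentiableAt ℝ g x) (μ : Fin 3) :
    pd (fun y => f y + g y) μ x = pd f μ x + pd g μ x := by
  rw [pd, fderiv_fun_add hf hg]; rfl

lemma pd_mul {f g : (Fin 3 → ℝ) → ℝ} {x : Fin 3 → ℝ} (hf : DifferentiableAt ℝ f x)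
    (hg : DifferentiableAt ℝ g x) (μ : Fin 3) :
    pd (fun y => f y * g y) μ x = pd f μ x * g x + f x * pd g μ x := by
  rw [pd, fderiv_fun_mul hf hg]
  simp [pd]
  ring

lemma pd_const_mul {g : (Fin 3 → ℝ) → ℝ} {x : Fin 3 → ℝ} (c : ℝ)
    (hg : DifferentiableAt ℝ g x) (μ : Fin 3) :
    pd (fun y => c * g y) μ x = c * pd g μ x := by
  rw [pd, fderiv_const_mul hg]; simp [pd]

lemma pd_sum {f : Fin 3 → (Fin 3 → ℝ) → ℝ} {x : Fin 3 → ℝ}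
    (hf : ∀ j, DifferentiableAt ℝ (f j) x) (μ : Fin 3) :
    pd (fun y => ∑ j, f j y) μ x = ∑ j, pd (f j) μ x := by
  rw [pd, fderiv_fun_sum (fun j _ => hf j)]; simp [pd]

lemma pd_ansatz (W V U : ℝ → ℝ) {x : Fin 3 → ℝ} (hx : x ≠ 0)
    (hW : DifferentiableAt ℝ W (rad x)) (hV : DifferentiableAt ℝ V (rad x))
    (hU : DifferentiableAt ℝ U (rad x)) (ν i μ : Fin 3) :
    pd (fun y => (∑ j, eps ν i j * y j / rad y) * W (rad y) +
      (if ν = i then (1:ℝ) else 0) * V (rad y) + y ν * y i / rad y ^ 2 * U (rad y)) μ x =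
    (∑ j, eps ν i j * ((if j = μ then (1:ℝ) else 0) * (W (rad x) / rad x)
        + x j * ((deriv W (rad x) * rad x - W (rad x)) / rad x ^ 2 * (x μ / rad x))))
    + (if ν = i then (1:ℝ) else 0) * (deriv V (rad x) * (x μ / rad x))
    + ((if ν = μ then (1:ℝ) else 0) * (x i * (U (rad x) / rad x ^ 2))
        + x ν * ((if i = μ then (1:ℝ) else 0) * (U (rad x) / rad x ^ 2)
          + x i * ((deriv U (rad x) * rad x ^ 2 - U (rad x) * (2 * rad x)) / (rad x ^ 2) ^ 2 * (x μ / rad x)))) := by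
  have hr0 : rad x ≠ 0 := ne_of_gt (rad_pos hx)
  set g1 : ℝ → ℝ := fun t => W t / t with hg1def
  set g3 : ℝ → ℝ := fun t => U t / t ^ 2 with hg3def
  have hg1 : DifferentiableAt ℝ g1 (rad x) := hW.div differentiableAt_fun_id hr0
  have hg3 : DifferentiableAt ℝ g3 (rad x) :=
    hU.div (differentiableAt_pow 2) (pow_ne_zero 2 hr0)
  have hdg1 : deriv g1 (rad x) = (deriv W (rad x) * rad x - W (rad x)) / rad x ^ 2 := by
    rw [hg1def, deriv_fun_div hW differentiableAt_fun_id hr0]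
    simp
  have hdg3 : deriv g3 (rad x) = (deriv U (rad x) * rad x ^ 2 - U (rad x) * (2 * rad x)) / (rad x ^ 2) ^ 2 := by
    rw [hg3def, deriv_fun_div hU (differentiableAt_pow 2) (pow_ne_zero 2 hr0)]
    simp [mul_comm]
  have hfun : (fun y => (∑ j, eps ν i j * y j / rad y) * W (rad y) +
      (if ν = i then (1:ℝ) else 0) * V (rad y) + y ν * y i / rad y ^ 2 * U (rad y)) =
      (fun y => ((∑ j, eps ν i j * (y j * g1 (rad y))) +
        (if ν = i then (1:ℝ) else 0) * V (rad y)) + y ν * (y i * g3 (rad y))) := by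
    funext y
    simp only [hg1def, hg3def, Fin.sum_univ_three]
    ring
  have d1 : DifferentiableAt ℝ (fun y : Fin 3 → ℝ => ∑ j, eps ν i j * (y j * g1 (rad y))) x := by
    apply DifferentiableAt.fun_sum
    intro j _
    exact ((diff_coord x j).mul (diff_radial hx hg1)).const_mul _
  have d2 : DifferentiableAt ℝ (fun y : Fin 3 → ℝ => (if ν = i then (1:ℝ) else 0) * V (rad y)) x :=
    (diff_radial hx hV).const_mul _
  have d3 : DifferentiableAt ℝ (fun y : Fin 3 → ℝ => y ν * (y i * g3 (rad y))) x :=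
    (diff_coord x ν).mul ((diff_coord x i).mul (diff_radial hx hg3))
  rw [hfun, pd_add (d1.fun_add d2) d3, pd_add d1 d2,
    pd_sum (fun j => ((diff_coord x j).fun_mul (diff_radial hx hg1)).const_mul _),
    pd_const_mul _ (diff_radial hx hV), pd_radial hx hV,
    pd_mul (diff_coord x ν) ((diff_coord x i).fun_mul (diff_radial hx hg3)),
    pd_mul (diff_coord x i) (diff_radial hx hg3), pd_radial hx hg3,
    pd_coord, pd_coord]
  have e : ∀ j : Fin 3, pd (fun y => eps ν i j * (y j * g1 (rad y))) μ x =
      eps ν i j * ((if j = μ then (1:ℝ) else 0) * (W (rad x) / rad x)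
        + x j * ((deriv W (rad x) * rad x - W (rad x)) / rad x ^ 2 * (x μ / rad x))) := by
    intro j
    rw [pd_const_mul _ ((diff_coord x j).fun_mul (diff_radial hx hg1)),
      pd_mul (diff_coord x j) (diff_radial hx hg1), pd_radial hx hg1, pd_coord, hdg1]
  rw [Finset.sum_congr rfl (fun j _ => e j), hdg3]

lemma epsv000 : eps 0 0 0 = 0 := by norm_num [eps]
lemma epsv001 : eps 0 0 1 = 0 := by norm_num [eps]
lemma epsv002 : eps 0 0 2 = 0 := by norm_num [eps]
lemma epsv010 : eps 0 1 0 = 0 := by norm_num [eps]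
lemma epsv011 : eps 0 1 1 = 0 := by norm_num [eps]
lemma epsv012 : eps 0 1 2 = 1 := by norm_num [eps]
lemma epsv020 : eps 0 2 0 = 0 := by norm_num [eps]
lemma epsv021 : eps 0 2 1 = -1 := by norm_num [eps]
lemma epsv022 : eps 0 2 2 = 0 := by norm_num [eps]
lemma epsv100 : eps 1 0 0 = 0 := by norm_num [eps]
lemma epsv101 : eps 1 0 1 = 0 := by norm_num [eps]
lemma epsv102 : eps 1 0 2 = -1 := by norm_num [eps]
lemma epsv110 : eps 1 1 0 = 0 := by norm_num [eps]
lemma epsv111 : eps 1 1 1 = 0 := by norm_num [eps]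
lemma epsv112 : eps 1 1 2 = 0 := by norm_num [eps]
lemma epsv120 : eps 1 2 0 = 1 := by norm_num [eps]
lemma epsv121 : eps 1 2 1 = 0 := by norm_num [eps]
lemma epsv122 : eps 1 2 2 = 0 := by norm_num [eps]
lemma epsv200 : eps 2 0 0 = 0 := by norm_num [eps]
lemma epsv201 : eps 2 0 1 = 1 := by norm_num [eps]
lemma epsv202 : eps 2 0 2 = 0 := by norm_num [eps]
lemma epsv210 : eps 2 1 0 = -1 := by norm_num [eps]
lemma epsv211 : eps 2 1 1 = 0 := by norm_num [eps]
lemma epsv212 : eps 2 1 2 = 0 := by norm_num [eps]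
lemma epsv220 : eps 2 2 0 = 0 := by norm_num [eps]
lemma epsv221 : eps 2 2 1 = 0 := by norm_num [eps]
lemma epsv222 : eps 2 2 2 = 0 := by norm_num [eps]

lemma epslist : True := trivial

set_option maxHeartbeats 2000000 in
/-- the curvature of the spherically symmetric ansatz
`A_μ{}^i = ε_μ{}^{ij} (x_j/r) W + δ_μ^i V + (x_μ x^i/r²) U` is given by (7) of the paper. -/
theorem stmt3 (W V U : ℝ → ℝ)
    (hW : ∀ r > 0, DifferentiableAt ℝ W r)
    (hV : ∀ r > 0, DifferentiableAt ℝ V r)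
    (hU : ∀ r > 0, DifferentiableAt ℝ U r)
    (A : (Fin 3 → ℝ) → Fin 3 → Fin 3 → ℝ)
    (hA : ∀ x, x ≠ 0 → ∀ μ i, A x μ i =
      (∑ j, eps μ i j * x j / rad x) * W (rad x) +
      (if μ = i then (1 : ℝ) else 0) * V (rad x) +
      x μ * x i / rad x ^ 2 * U (rad x)) :
    ∀ x, x ≠ 0 → ∀ μ ν i,
      pd (fun y => A y ν i) μ x - pd (fun y => A y μ i) ν x +
        ∑ j, ∑ k, A x μ j * A x ν k * eps j k i =
      eps μ ν i *
        (deriv W (rad x) + W (rad x) / rad x + V (rad x) * (V (rad x) + U (rad x))) +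
      (∑ j, eps μ ν j * x j) * x i / rad x ^ 3 *
        (W (rad x) - rad x * deriv W (rad x) + rad x * W (rad x) ^ 2 -
          rad x * V (rad x) * U (rad x)) +
      (x μ * (if ν = i then (1 : ℝ) else 0) - x ν * (if μ = i then (1 : ℝ) else 0)) /
          rad x ^ 2 *
        (rad x * deriv V (rad x) - U (rad x) - rad x * W (rad x) * (V (rad x) + U (rad x))) := by
  intro x hx μ ν i
  have hrpos := rad_pos hx
  have hrne : rad x ≠ 0 := ne_of_gt hrpos
  have hW' := hW (rad x) hrpos
  have hV' := hV (rad x) hrpos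
  have hU' := hU (rad x) hrpos
  have key : ∀ a b c : Fin 3, pd (fun y => A y a b) c x =
      (∑ j, eps a b j * ((if j = c then (1:ℝ) else 0) * (W (rad x) / rad x)
        + x j * ((deriv W (rad x) * rad x - W (rad x)) / rad x ^ 2 * (x c / rad x))))
    + (if a = b then (1:ℝ) else 0) * (deriv V (rad x) * (x c / rad x))
    + ((if a = c then (1:ℝ) else 0) * (x b * (U (rad x) / rad x ^ 2))
        + x a * ((if b = c then (1:ℝ) else 0) * (U (rad x) / rad x ^ 2)
          + x b * ((deriv U (rad x) * rad x ^ 2 - U (rad x) * (2 * rad x)) / (rad x ^ 2) ^ 2 * (x c / rad x)))) := by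
    intro a b c
    have hev : (fun y => A y a b) =ᶠ[nhds x]
        (fun y => (∑ j, eps a b j * y j / rad y) * W (rad y) +
          (if a = b then (1:ℝ) else 0) * V (rad y) + y a * y b / rad y ^ 2 * U (rad y)) :=
      Filter.eventually_of_mem (IsOpen.mem_nhds isOpen_ne hx) (fun y hy => hA y hy a b)
    rw [pd, hev.fderiv_eq, ← pd]
    exact pd_ansatz W V U hx hW' hV' hU' a b c
  rw [key ν i μ, key μ i ν]
  simp only [hA x hx]
  have hr2 : x 0 ^ 2 + x 1 ^ 2 + x 2 ^ 2 = rad x ^ 2 := by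
    rw [rad_sq]; simp [Fin.sum_univ_three]
  set r := rad x with hrdef
  clear_value r
  clear hW hV hU hA hW' hV' hU' hrdef hx
  set w := W r; set w' := deriv W r; set v := V r; set v' := deriv V r
  set u := U r; set u' := deriv U r
  clear_value w w' v v' u u'
  have ht : r * r⁻¹ = 1 := mul_inv_cancel₀ hrne
  fin_cases μ <;> fin_cases ν <;> fin_cases i
  · simp only [Fin.zero_eta, Fin.mk_one, Fin.reduceFinMk, Fin.sum_univ_three, Fin.isValue, epsv000, epsv001, epsv002, epsv010, epsv011, epsv012, epsv020, epsv021, epsv022, epsv100, epsv101, epsv102, epsv110, epsv111, epsv112, epsv120, epsv121, epsv122, epsv200, epsv201, epsv202, epsv210, epsv211, epsv212, epsv220, epsv221, epsv222, Fin.reduceEq, reduceIte]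
    linear_combination ((0:ℝ)) * ht + ((0:ℝ)) * hr2
  · simp only [Fin.zero_eta, Fin.mk_one, Fin.reduceFinMk, Fin.sum_univ_three, Fin.isValue, epsv000, epsv001, epsv002, epsv010, epsv011, epsv012, epsv020, epsv021, epsv022, epsv100, epsv101, epsv102, epsv110, epsv111, epsv112, epsv120, epsv121, epsv122, epsv200, epsv201, epsv202, epsv210, epsv211, epsv212, epsv220, epsv221, epsv222, Fin.reduceEq, reduceIte]
    linear_combination ((0:ℝ)) * ht + ((0:ℝ)) * hr2
  · simp only [Fin.zero_eta, Fin.mk_one, Fin.reduceFinMk, Fin.sum_univ_three, Fin.isValue, epsv000, epsv001, epsv002, epsv010, epsv011, epsv012, epsv020, epsv021, epsv022, epsv100, epsv101, epsv102, epsv110, epsv111, epsv112, epsv120, epsv121, epsv122, epsv200, epsv201, epsv202, epsv210, epsv211, epsv212, epsv220, epsv221, epsv222, Fin.reduceEq, reduceIte]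
    linear_combination ((0:ℝ)) * ht + ((0:ℝ)) * hr2
  · simp only [Fin.zero_eta, Fin.mk_one, Fin.reduceFinMk, Fin.sum_univ_three, Fin.isValue, epsv000, epsv001, epsv002, epsv010, epsv011, epsv012, epsv020, epsv021, epsv022, epsv100, epsv101, epsv102, epsv110, epsv111, epsv112, epsv120, epsv121, epsv122, epsv200, epsv201, epsv202, epsv210, epsv211, epsv212, epsv220, epsv221, epsv222, Fin.reduceEq, reduceIte]
    linear_combination ((1:ℝ)*x 1*r⁻¹*v' + (-1:ℝ)*x 1*r⁻¹*w*v + (1:ℝ)*x 1*r*(r⁻¹) ^ 2*w*u + (1:ℝ)*x 0*x 2*(r⁻¹) ^ 2*v*u + (-1:ℝ)*x 0*x 2*(r⁻¹) ^ 2*(w) ^ 2) * ht + ((1:ℝ)*x 1*(r⁻¹) ^ 3*w*u) * hr2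
  · simp only [Fin.zero_eta, Fin.mk_one, Fin.reduceFinMk, Fin.sum_univ_three, Fin.isValue, epsv000, epsv001, epsv002, epsv010, epsv011, epsv012, epsv020, epsv021, epsv022, epsv100, epsv101, epsv102, epsv110, epsv111, epsv112, epsv120, epsv121, epsv122, epsv200, epsv201, epsv202, epsv210, epsv211, epsv212, epsv220, epsv221, epsv222, Fin.reduceEq, reduceIte]
    linear_combination ((1:ℝ)*x 1*x 2*(r⁻¹) ^ 2*v*u + (-1:ℝ)*x 1*x 2*(r⁻¹) ^ 2*(w) ^ 2 + (-1:ℝ)*x 0*r⁻¹*v' + (1:ℝ)*x 0*r⁻¹*w*v + (-1:ℝ)*x 0*r*(r⁻¹) ^ 2*w*u) * ht + ((-1:ℝ)*x 0*(r⁻¹) ^ 3*w*u) * hr2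
  · simp only [Fin.zero_eta, Fin.mk_one, Fin.reduceFinMk, Fin.sum_univ_three, Fin.isValue, epsv000, epsv001, epsv002, epsv010, epsv011, epsv012, epsv020, epsv021, epsv022, epsv100, epsv101, epsv102, epsv110, epsv111, epsv112, epsv120, epsv121, epsv122, epsv200, epsv201, epsv202, epsv210, epsv211, epsv212, epsv220, epsv221, epsv222, Fin.reduceEq, reduceIte]
    linear_combination ((1:ℝ)*v*u + (1:ℝ)*w' + (-1:ℝ)*r⁻¹*w + (1:ℝ)*r*r⁻¹*v*u + (1:ℝ)*r*r⁻¹*w' + (-1:ℝ)*r*(r⁻¹) ^ 2*w + (1:ℝ)*(x 2) ^ 2*(r⁻¹) ^ 2*v*u + (1:ℝ)*(x 2) ^ 2*(r⁻¹) ^ 2*w' + (-1:ℝ)*(x 2) ^ 2*(r⁻¹) ^ 2*(w) ^ 2 + (1:ℝ)*(x 1) ^ 2*(r⁻¹) ^ 2*w' + (1:ℝ)*(x 0) ^ 2*(r⁻¹) ^ 2*w') * ht + ((1:ℝ)*(r⁻¹) ^ 2*v*u + (1:ℝ)*(r⁻¹) ^ 2*w' + (-1:ℝ)*(r⁻¹)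 ^ 3*w) * hr2
  · simp only [Fin.zero_eta, Fin.mk_one, Fin.reduceFinMk, Fin.sum_univ_three, Fin.isValue, epsv000, epsv001, epsv002, epsv010, epsv011, epsv012, epsv020, epsv021, epsv022, epsv100, epsv101, epsv102, epsv110, epsv111, epsv112, epsv120, epsv121, epsv122, epsv200, epsv201, epsv202, epsv210, epsv211, epsv212, epsv220, epsv221, epsv222, Fin.reduceEq, reduceIte]
    linear_combination ((1:ℝ)*x 2*r⁻¹*v' + (-1:ℝ)*x 2*r⁻¹*w*v + (1:ℝ)*x 2*r*(r⁻¹) ^ 2*w*u + (-1:ℝ)*x 0*x 1*(r⁻¹) ^ 2*v*u + (1:ℝ)*x 0*x 1*(r⁻¹) ^ 2*(w) ^ 2) * ht + ((1:ℝ)*x 2*(r⁻¹) ^ 3*w*u) * hr2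
  · simp only [Fin.zero_eta, Fin.mk_one, Fin.reduceFinMk, Fin.sum_univ_three, Fin.isValue, epsv000, epsv001, epsv002, epsv010, epsv011, epsv012, epsv020, epsv021, epsv022, epsv100, epsv101, epsv102, epsv110, epsv111, epsv112, epsv120, epsv121, epsv122, epsv200, epsv201, epsv202, epsv210, epsv211, epsv212, epsv220, epsv221, epsv222, Fin.reduceEq, reduceIte]
    linear_combination ((-1:ℝ)*v*u + (-1:ℝ)*w' + (1:ℝ)*r⁻¹*w + (-1:ℝ)*r*r⁻¹*v*u + (-1:ℝ)*r*r⁻¹*w' + (1:ℝ)*r*(r⁻¹) ^ 2*w + (-1:ℝ)*(x 2) ^ 2*(r⁻¹) ^ 2*w' + (-1:ℝ)*(x 1) ^ 2*(r⁻¹) ^ 2*v*u + (-1:ℝ)*(x 1) ^ 2*(r⁻¹) ^ 2*w' + (1:ℝ)*(x 1) ^ 2*(r⁻¹) ^ 2*(w) ^ 2 + (-1:ℝ)*(x 0) ^ 2*(r⁻¹) ^ 2*w') * ht + ((-1:ℝ)*(r⁻¹) ^ 2*v*u + (-1:ℝ)*(r⁻¹) ^ 2*w' + (1:ℝ)*(r⁻¹)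 ^ 3*w) * hr2
  · simp only [Fin.zero_eta, Fin.mk_one, Fin.reduceFinMk, Fin.sum_univ_three, Fin.isValue, epsv000, epsv001, epsv002, epsv010, epsv011, epsv012, epsv020, epsv021, epsv022, epsv100, epsv101, epsv102, epsv110, epsv111, epsv112, epsv120, epsv121, epsv122, epsv200, epsv201, epsv202, epsv210, epsv211, epsv212, epsv220, epsv221, epsv222, Fin.reduceEq, reduceIte]
    linear_combination ((-1:ℝ)*x 1*x 2*(r⁻¹) ^ 2*v*u + (1:ℝ)*x 1*x 2*(r⁻¹) ^ 2*(w) ^ 2 + (-1:ℝ)*x 0*r⁻¹*v' + (1:ℝ)*x 0*r⁻¹*w*v + (-1:ℝ)*x 0*r*(r⁻¹) ^ 2*w*u) * ht + ((-1:ℝ)*x 0*(r⁻¹) ^ 3*w*u) * hr2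
  · simp only [Fin.zero_eta, Fin.mk_one, Fin.reduceFinMk, Fin.sum_univ_three, Fin.isValue, epsv000, epsv001, epsv002, epsv010, epsv011, epsv012, epsv020, epsv021, epsv022, epsv100, epsv101, epsv102, epsv110, epsv111, epsv112, epsv120, epsv121, epsv122, epsv200, epsv201, epsv202, epsv210, epsv211, epsv212, epsv220, epsv221, epsv222, Fin.reduceEq, reduceIte]
    linear_combination ((-1:ℝ)*x 1*r⁻¹*v' + (1:ℝ)*x 1*r⁻¹*w*v + (-1:ℝ)*x 1*r*(r⁻¹) ^ 2*w*u + (-1:ℝ)*x 0*x 2*(r⁻¹) ^ 2*v*u + (1:ℝ)*x 0*x 2*(r⁻¹) ^ 2*(w) ^ 2) * ht + ((-1:ℝ)*x 1*(r⁻¹) ^ 3*w*u) * hr2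
  · simp only [Fin.zero_eta, Fin.mk_one, Fin.reduceFinMk, Fin.sum_univ_three, Fin.isValue, epsv000, epsv001, epsv002, epsv010, epsv011, epsv012, epsv020, epsv021, epsv022, epsv100, epsv101, epsv102, epsv110, epsv111, epsv112, epsv120, epsv121, epsv122, epsv200, epsv201, epsv202, epsv210, epsv211, epsv212, epsv220, epsv221, epsv222, Fin.reduceEq, reduceIte]
    linear_combination ((-1:ℝ)*x 1*x 2*(r⁻¹) ^ 2*v*u + (1:ℝ)*x 1*x 2*(r⁻¹) ^ 2*(w) ^ 2 + (1:ℝ)*x 0*r⁻¹*v' + (-1:ℝ)*x 0*r⁻¹*w*v + (1:ℝ)*x 0*r*(r⁻¹) ^ 2*w*u) * ht + ((1:ℝ)*x 0*(r⁻¹) ^ 3*w*u) * hr2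
  · simp only [Fin.zero_eta, Fin.mk_one, Fin.reduceFinMk, Fin.sum_univ_three, Fin.isValue, epsv000, epsv001, epsv002, epsv010, epsv011, epsv012, epsv020, epsv021, epsv022, epsv100, epsv101, epsv102, epsv110, epsv111, epsv112, epsv120, epsv121, epsv122, epsv200, epsv201, epsv202, epsv210, epsv211, epsv212, epsv220, epsv221, epsv222, Fin.reduceEq, reduceIte]
    linear_combination ((-1:ℝ)*v*u + (-1:ℝ)*w' + (1:ℝ)*r⁻¹*w + (-1:ℝ)*r*r⁻¹*v*u + (-1:ℝ)*r*r⁻¹*w' + (1:ℝ)*r*(r⁻¹) ^ 2*w + (-1:ℝ)*(x 2) ^ 2*(r⁻¹) ^ 2*v*u + (-1:ℝ)*(x 2) ^ 2*(r⁻¹) ^ 2*w' + (1:ℝ)*(x 2) ^ 2*(r⁻¹) ^ 2*(w) ^ 2 + (-1:ℝ)*(x 1) ^ 2*(r⁻¹) ^ 2*w' + (-1:ℝ)*(x 0) ^ 2*(r⁻¹) ^ 2*w') * ht + ((-1:ℝ)*(r⁻¹) ^ 2*v*u + (-1:ℝ)*(r⁻¹) ^ 2*w' + (1:ℝ)*(r⁻¹)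 ^ 3*w) * hr2
  · simp only [Fin.zero_eta, Fin.mk_one, Fin.reduceFinMk, Fin.sum_univ_three, Fin.isValue, epsv000, epsv001, epsv002, epsv010, epsv011, epsv012, epsv020, epsv021, epsv022, epsv100, epsv101, epsv102, epsv110, epsv111, epsv112, epsv120, epsv121, epsv122, epsv200, epsv201, epsv202, epsv210, epsv211, epsv212, epsv220, epsv221, epsv222, Fin.reduceEq, reduceIte]
    linear_combination ((0:ℝ)) * ht + ((0:ℝ)) * hr2
  · simp only [Fin.zero_eta, Fin.mk_one, Fin.reduceFinMk, Fin.sum_univ_three, Fin.isValue, epsv000, epsv001, epsv002, epsv010, epsv011, epsv012, epsv020, epsv021, epsv022, epsv100, epsv101, epsv102, epsv110, epsv111, epsv112, epsv120, epsv121, epsv122, epsv200, epsv201, epsv202, epsv210, epsv211, epsv212, epsv220, epsv221, epsv222, Fin.reduceEq, reduceIte]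
    linear_combination ((0:ℝ)) * ht + ((0:ℝ)) * hr2
  · simp only [Fin.zero_eta, Fin.mk_one, Fin.reduceFinMk, Fin.sum_univ_three, Fin.isValue, epsv000, epsv001, epsv002, epsv010, epsv011, epsv012, epsv020, epsv021, epsv022, epsv100, epsv101, epsv102, epsv110, epsv111, epsv112, epsv120, epsv121, epsv122, epsv200, epsv201, epsv202, epsv210, epsv211, epsv212, epsv220, epsv221, epsv222, Fin.reduceEq, reduceIte]
    linear_combination ((0:ℝ)) * ht + ((0:ℝ)) * hr2
  · simp only [Fin.zero_eta, Fin.mk_one, Fin.reduceFinMk, Fin.sum_univ_three, Fin.isValue, epsv000, epsv001, epsv002, epsv010, epsv011, epsv012, epsv020, epsv021, epsv022, epsv100, epsv101, epsv102, epsv110, epsv111, epsv112, epsv120, epsv121, epsv122, epsv200, epsv201, epsv202, epsv210, epsv211, epsv212, epsv220, epsv221, epsv222, Fin.reduceEq, reduceIte]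
    linear_combination ((1:ℝ)*v*u + (1:ℝ)*w' + (-1:ℝ)*r⁻¹*w + (1:ℝ)*r*r⁻¹*v*u + (1:ℝ)*r*r⁻¹*w' + (-1:ℝ)*r*(r⁻¹) ^ 2*w + (1:ℝ)*(x 2) ^ 2*(r⁻¹) ^ 2*w' + (1:ℝ)*(x 1) ^ 2*(r⁻¹) ^ 2*w' + (1:ℝ)*(x 0) ^ 2*(r⁻¹) ^ 2*v*u + (1:ℝ)*(x 0) ^ 2*(r⁻¹) ^ 2*w' + (-1:ℝ)*(x 0) ^ 2*(r⁻¹) ^ 2*(w) ^ 2) * ht + ((1:ℝ)*(r⁻¹) ^ 2*v*u + (1:ℝ)*(r⁻¹) ^ 2*w' + (-1:ℝ)*(r⁻¹) ^ 3*w) * hr2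
  · simp only [Fin.zero_eta, Fin.mk_one, Fin.reduceFinMk, Fin.sum_univ_three, Fin.isValue, epsv000, epsv001, epsv002, epsv010, epsv011, epsv012, epsv020, epsv021, epsv022, epsv100, epsv101, epsv102, epsv110, epsv111, epsv112, epsv120, epsv121, epsv122, epsv200, epsv201, epsv202, epsv210, epsv211, epsv212, epsv220, epsv221, epsv222, Fin.reduceEq, reduceIte]
    linear_combination ((1:ℝ)*x 2*r⁻¹*v' + (-1:ℝ)*x 2*r⁻¹*w*v + (1:ℝ)*x 2*r*(r⁻¹) ^ 2*w*u + (1:ℝ)*x 0*x 1*(r⁻¹) ^ 2*v*u + (-1:ℝ)*x 0*x 1*(r⁻¹) ^ 2*(w) ^ 2) * ht + ((1:ℝ)*x 2*(r⁻¹) ^ 3*w*u) * hr2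
  · simp only [Fin.zero_eta, Fin.mk_one, Fin.reduceFinMk, Fin.sum_univ_three, Fin.isValue, epsv000, epsv001, epsv002, epsv010, epsv011, epsv012, epsv020, epsv021, epsv022, epsv100, epsv101, epsv102, epsv110, epsv111, epsv112, epsv120, epsv121, epsv122, epsv200, epsv201, epsv202, epsv210, epsv211, epsv212, epsv220, epsv221, epsv222, Fin.reduceEq, reduceIte]
    linear_combination ((-1:ℝ)*x 1*r⁻¹*v' + (1:ℝ)*x 1*r⁻¹*w*v + (-1:ℝ)*x 1*r*(r⁻¹) ^ 2*w*u + (1:ℝ)*x 0*x 2*(r⁻¹) ^ 2*v*u + (-1:ℝ)*x 0*x 2*(r⁻¹) ^ 2*(w) ^ 2) * ht + ((-1:ℝ)*x 1*(r⁻¹) ^ 3*w*u) * hr2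
  · simp only [Fin.zero_eta, Fin.mk_one, Fin.reduceFinMk, Fin.sum_univ_three, Fin.isValue, epsv000, epsv001, epsv002, epsv010, epsv011, epsv012, epsv020, epsv021, epsv022, epsv100, epsv101, epsv102, epsv110, epsv111, epsv112, epsv120, epsv121, epsv122, epsv200, epsv201, epsv202, epsv210, epsv211, epsv212, epsv220, epsv221, epsv222, Fin.reduceEq, reduceIte]
    linear_combination ((-1:ℝ)*x 2*r⁻¹*v' + (1:ℝ)*x 2*r⁻¹*w*v + (-1:ℝ)*x 2*r*(r⁻¹) ^ 2*w*u + (1:ℝ)*x 0*x 1*(r⁻¹) ^ 2*v*u + (-1:ℝ)*x 0*x 1*(r⁻¹) ^ 2*(w) ^ 2) * ht + ((-1:ℝ)*x 2*(r⁻¹) ^ 3*w*u) * hr2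
  · simp only [Fin.zero_eta, Fin.mk_one, Fin.reduceFinMk, Fin.sum_univ_three, Fin.isValue, epsv000, epsv001, epsv002, epsv010, epsv011, epsv012, epsv020, epsv021, epsv022, epsv100, epsv101, epsv102, epsv110, epsv111, epsv112, epsv120, epsv121, epsv122, epsv200, epsv201, epsv202, epsv210, epsv211, epsv212, epsv220, epsv221, epsv222, Fin.reduceEq, reduceIte]
    linear_combination ((1:ℝ)*v*u + (1:ℝ)*w' + (-1:ℝ)*r⁻¹*w + (1:ℝ)*r*r⁻¹*v*u + (1:ℝ)*r*r⁻¹*w' + (-1:ℝ)*r*(r⁻¹) ^ 2*w + (1:ℝ)*(x 2) ^ 2*(r⁻¹) ^ 2*w' + (1:ℝ)*(x 1) ^ 2*(r⁻¹) ^ 2*v*u + (1:ℝ)*(x 1) ^ 2*(r⁻¹) ^ 2*w' + (-1:ℝ)*(x 1) ^ 2*(r⁻¹) ^ 2*(w) ^ 2 + (1:ℝ)*(x 0) ^ 2*(r⁻¹) ^ 2*w') * ht + ((1:ℝ)*(r⁻¹) ^ 2*v*u + (1:ℝ)*(r⁻¹) ^ 2*w' + (-1:ℝ)*(r⁻¹)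 ^ 3*w) * hr2
  · simp only [Fin.zero_eta, Fin.mk_one, Fin.reduceFinMk, Fin.sum_univ_three, Fin.isValue, epsv000, epsv001, epsv002, epsv010, epsv011, epsv012, epsv020, epsv021, epsv022, epsv100, epsv101, epsv102, epsv110, epsv111, epsv112, epsv120, epsv121, epsv122, epsv200, epsv201, epsv202, epsv210, epsv211, epsv212, epsv220, epsv221, epsv222, Fin.reduceEq, reduceIte]
    linear_combination ((1:ℝ)*x 1*x 2*(r⁻¹) ^ 2*v*u + (-1:ℝ)*x 1*x 2*(r⁻¹) ^ 2*(w) ^ 2 + (1:ℝ)*x 0*r⁻¹*v' + (-1:ℝ)*x 0*r⁻¹*w*v + (1:ℝ)*x 0*r*(r⁻¹) ^ 2*w*u) * ht + ((1:ℝ)*x 0*(r⁻¹) ^ 3*w*u) * hr2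
  · simp only [Fin.zero_eta, Fin.mk_one, Fin.reduceFinMk, Fin.sum_univ_three, Fin.isValue, epsv000, epsv001, epsv002, epsv010, epsv011, epsv012, epsv020, epsv021, epsv022, epsv100, epsv101, epsv102, epsv110, epsv111, epsv112, epsv120, epsv121, epsv122, epsv200, epsv201, epsv202, epsv210, epsv211, epsv212, epsv220, epsv221, epsv222, Fin.reduceEq, reduceIte]
    linear_combination ((-1:ℝ)*v*u + (-1:ℝ)*w' + (1:ℝ)*r⁻¹*w + (-1:ℝ)*r*r⁻¹*v*u + (-1:ℝ)*r*r⁻¹*w' + (1:ℝ)*r*(r⁻¹) ^ 2*w + (-1:ℝ)*(x 2) ^ 2*(r⁻¹) ^ 2*w' + (-1:ℝ)*(x 1) ^ 2*(r⁻¹) ^ 2*w' + (-1:ℝ)*(x 0) ^ 2*(r⁻¹) ^ 2*v*u + (-1:ℝ)*(x 0) ^ 2*(r⁻¹) ^ 2*w' + (1:ℝ)*(x 0) ^ 2*(r⁻¹) ^ 2*(w) ^ 2) * ht + ((-1:ℝ)*(r⁻¹) ^ 2*v*u + (-1:ℝ)*(r⁻¹) ^ 2*w' + (1:ℝ)*(r⁻¹)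 ^ 3*w) * hr2
  · simp only [Fin.zero_eta, Fin.mk_one, Fin.reduceFinMk, Fin.sum_univ_three, Fin.isValue, epsv000, epsv001, epsv002, epsv010, epsv011, epsv012, epsv020, epsv021, epsv022, epsv100, epsv101, epsv102, epsv110, epsv111, epsv112, epsv120, epsv121, epsv122, epsv200, epsv201, epsv202, epsv210, epsv211, epsv212, epsv220, epsv221, epsv222, Fin.reduceEq, reduceIte]
    linear_combination ((-1:ℝ)*x 2*r⁻¹*v' + (1:ℝ)*x 2*r⁻¹*w*v + (-1:ℝ)*x 2*r*(r⁻¹) ^ 2*w*u + (-1:ℝ)*x 0*x 1*(r⁻¹) ^ 2*v*u + (1:ℝ)*x 0*x 1*(r⁻¹) ^ 2*(w) ^ 2) * ht + ((-1:ℝ)*x 2*(r⁻¹) ^ 3*w*u) * hr2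
  · simp only [Fin.zero_eta, Fin.mk_one, Fin.reduceFinMk, Fin.sum_univ_three, Fin.isValue, epsv000, epsv001, epsv002, epsv010, epsv011, epsv012, epsv020, epsv021, epsv022, epsv100, epsv101, epsv102, epsv110, epsv111, epsv112, epsv120, epsv121, epsv122, epsv200, epsv201, epsv202, epsv210, epsv211, epsv212, epsv220, epsv221, epsv222, Fin.reduceEq, reduceIte]
    linear_combination ((1:ℝ)*x 1*r⁻¹*v' + (-1:ℝ)*x 1*r⁻¹*w*v + (1:ℝ)*x 1*r*(r⁻¹) ^ 2*w*u + (-1:ℝ)*x 0*x 2*(r⁻¹) ^ 2*v*u + (1:ℝ)*x 0*x 2*(r⁻¹) ^ 2*(w) ^ 2) * ht + ((1:ℝ)*x 1*(r⁻¹) ^ 3*w*u) * hr2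
  · simp only [Fin.zero_eta, Fin.mk_one, Fin.reduceFinMk, Fin.sum_univ_three, Fin.isValue, epsv000, epsv001, epsv002, epsv010, epsv011, epsv012, epsv020, epsv021, epsv022, epsv100, epsv101, epsv102, epsv110, epsv111, epsv112, epsv120, epsv121, epsv122, epsv200, epsv201, epsv202, epsv210, epsv211, epsv212, epsv220, epsv221, epsv222, Fin.reduceEq, reduceIte]
    linear_combination ((0:ℝ)) * ht + ((0:ℝ)) * hr2
  · simp only [Fin.zero_eta, Fin.mk_one, Fin.reduceFinMk, Fin.sum_univ_three, Fin.isValue, epsv000, epsv001, epsv002, epsv010, epsv011, epsv012, epsv020, epsv021, epsv022, epsv100, epsv101, epsv102, epsv110, epsv111, epsv112, epsv120, epsv121, epsv122, epsv200, epsv201, epsv202, epsv210, epsv211, epsv212, epsv220, epsv221, epsv222, Fin.reduceEq, reduceIte]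
    linear_combination ((0:ℝ)) * ht + ((0:ℝ)) * hr2
  · simp only [Fin.zero_eta, Fin.mk_one, Fin.reduceFinMk, Fin.sum_univ_three, Fin.isValue, epsv000, epsv001, epsv002, epsv010, epsv011, epsv012, epsv020, epsv021, epsv022, epsv100, epsv101, epsv102, epsv110, epsv111, epsv112, epsv120, epsv121, epsv122, epsv200, epsv201, epsv202, epsv210, epsv211, epsv212, epsv220, epsv221, epsv222, Fin.reduceEq, reduceIte]
    linear_combination ((0:ℝ)) * ht + ((0:ℝ)) * hr2
end

section
/- Let f : (0,∞) → ℝ be differentiable and let A be the general spherically symmetric flat SO(3)-connection determined by f. Then for every x ∈ ℝ³∖{0} and every i, the radial contraction satisfies Σ_μ x^μ A_μ{}^i(x) = f'(r) x^i, where r = |x|. Equivalently, in matrix form A_{μ i}{}^j := Σ_k A_μ{}^k ε_{ki}{}^j one has Σ_μ x^μ A_{μ i}{}^j(x) = f'(r) Σ_k x^k ε_{ki}{}^j. -/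
/-- The general spherically symmetric flat SO(3)-connection determined by `f`:
`A_μ{}^i = ε_{μij} x_j (cos f - 1)/r² + δ_μ^i sin f / r + x_μ x^i (r f' - sin f)/r³`. -/
noncomputable def Aconn (f : ℝ → ℝ) (x : Fin 3 → ℝ) (μ i : Fin 3) : ℝ :=
  (∑ j, eps μ i j * x j) * (Real.cos (f (rad x)) - 1) / rad x ^ 2 +
  (if μ = i then (1 : ℝ) else 0) * Real.sin (f (rad x)) / rad x +
  x μ * x i * (rad x * deriv f (rad x) - Real.sin (f (rad x))) / rad x ^ 3

/-- the radial contraction of the spherically symmetric flat connection: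
`x^μ A_μ{}^i = f'(r) x^i`, and in matrix form `x^μ A_{μi}{}^j = f'(r) x^k ε_{ki}{}^j`. -/
theorem stmt8 (f : ℝ → ℝ) (hf : ∀ r > 0, DifferentiableAt ℝ f r) :
    ∀ x : Fin 3 → ℝ, x ≠ 0 →
      (∀ i, ∑ μ, x μ * Aconn f x μ i = deriv f (rad x) * x i) ∧
      (∀ i j, ∑ μ, x μ * (∑ k, Aconn f x μ k * eps k i j) =
        deriv f (rad x) * ∑ k, x k * eps k i j) := by
  intro x hx
  have hS : (0:ℝ) < ∑ i, x i ^ 2 := by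
    rcases Function.ne_iff.mp hx with ⟨i, hi⟩
    have h1 : 0 < x i ^ 2 :=
      lt_of_le_of_ne (sq_nonneg _) (Ne.symm (pow_ne_zero 2 hi))
    exact h1.trans_le
      (Finset.single_le_sum (f := fun j => x j ^ 2)
        (fun j _ => sq_nonneg _) (Finset.mem_univ i))
  have hr0 : rad x ≠ 0 := ne_of_gt (Real.sqrt_pos.mpr hS)
  have hr2 : rad x ^ 2 = x 0 ^ 2 + x 1 ^ 2 + x 2 ^ 2 := by
    rw [rad, Real.sq_sqrt hS.le, Fin.sum_univ_three]
  have hSne : x 0 ^ 2 + x 1 ^ 2 + x 2 ^ 2 ≠ 0 := by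
    rw [Fin.sum_univ_three] at hS; exact hS.ne'
  have h3 : rad x ^ 3 = (x 0 ^ 2 + x 1 ^ 2 + x 2 ^ 2) * rad x := by
    rw [pow_succ, hr2]
  have h1 : ∀ i, ∑ μ, x μ * Aconn f x μ i = deriv f (rad x) * x i := by
    intro i
    fin_cases i <;>
    · simp only [Aconn, Fin.sum_univ_three, h3, hr2, show (⟨2, by omega⟩ : Fin 3) = 2 from rfl,
        show (⟨1, by omega⟩ : Fin 3) = 1 from rfl, show (⟨0, by omega⟩ : Fin 3) = 0 from rfl]
      norm_num [eps, Fin.ext_iff]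
      field_simp
      ring
  refine ⟨h1, fun i j => ?_⟩
  calc ∑ μ, x μ * (∑ k, Aconn f x μ k * eps k i j)
      = ∑ k, (∑ μ, x μ * Aconn f x μ k) * eps k i j := by
        simp_rw [Finset.mul_sum]
        rw [Finset.sum_comm]
        simp_rw [← mul_assoc, ← Finset.sum_mul]
    _ = deriv f (rad x) * ∑ k, x k * eps k i j := by
        simp only [h1]
        rw [Finset.mul_sum]
        exact Finset.sum_congr rfl fun k _ => by ring
end
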